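/- In the iterative pairing procedure of Lemma 'absorbentropy': given states α_j on A and β_j on B with equal traces, ranks a_j and b_j, spectral decompositions with eigenvalues listed in non-decreasing order, and |u_j⟩ = Σ_{i=1}^{min(a_j,b_j)} √(min(λ_{j,i}, μ_{j,i})) |s_{j,i}⟩⊗|r_{j,i}⟩, the updated states α_{j+1} = α_j − Tr_B|u_j⟩⟨u_j| and β_{j+1} = β_j − Tr_A|u_j⟩⟨u_j| are positive semi-definite and satisfy rank(α_{j+1}) + rank(β_{j+1}) ≤ max(a_j, b_j). -/

import Mathlib

open Matrix
open scoped ComplexOrder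

/-- Outer product `|u⟩⟨u|`. -/
noncomputable def outerM {n : Type*} (u : n → ℂ) : Matrix n n ℂ :=
  Matrix.vecMulVec u (star u)

/-- Partial trace over the second factor `B`. -/
noncomputable def ptraceB {A B : Type*} [Fintype A] [Fintype B]
    (σ : Matrix (A × B) (A × B) ℂ) : Matrix A A ℂ :=
  Matrix.of fun x x' => ∑ y, σ (x, y) (x', y)

/-- Partial trace over the first factor `A`. -/
noncomputable def ptraceA {A B : Type*} [Fintype A] [Fintype B]
    (σ : Matrix (A × B) (A × B) ℂ) : Matrix B B ℂ :=
  Matrix.of fun y y' => ∑ x, σ (x, y) (x, y')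

section Helpers

lemma outerM_psd {n : Type*} [Fintype n] (u : n → ℂ) : (outerM u).PosSemidef := by
  rw [posSemidef_iff_dotProduct_mulVec]
  constructor
  · ext p q
    simp [outerM, vecMulVec_apply, conjTranspose_apply, mul_comm]
  · intro x
    have h : (outerM u) *ᵥ x = fun p => u p * (star u ⬝ᵥ x) := by
      ext p
      simp [outerM, mulVec, vecMulVec_apply, dotProduct, Finset.mul_sum, mul_assoc]
    rw [h]
    have h2 : star x ⬝ᵥ (fun p => u p * (star u ⬝ᵥ x)) = star (star u ⬝ᵥ x) * (star u ⬝ᵥ x) := by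
      simp [dotProduct, Finset.sum_mul, star_sum, mul_comm, mul_left_comm, mul_assoc]
    rw [h2]
    exact star_mul_self_nonneg _

lemma psd_add {n : Type*} [Fintype n] {M N : Matrix n n ℂ} (hM : M.PosSemidef)
    (hN : N.PosSemidef) : (M + N).PosSemidef :=
  posSemidef_iff_dotProduct_mulVec.mpr ⟨hM.1.add hN.1, fun x => by rw [add_mulVec, dotProduct_add]; exact add_nonneg (hM.dotProduct_mulVec_nonneg x) (hN.dotProduct_mulVec_nonneg x)⟩

lemma psd_smul {n : Type*} [Fintype n] {M : Matrix n n ℂ} {c : ℝ} (hc : 0 ≤ c)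
    (hM : M.PosSemidef) : ((c : ℂ) • M).PosSemidef := by
  rw [posSemidef_iff_dotProduct_mulVec]
  constructor
  · unfold Matrix.IsHermitian
    rw [conjTranspose_smul, hM.1.eq]
    congr 1
    simp
  · intro x
    rw [smul_mulVec, dotProduct_smul, smul_eq_mul]
    exact mul_nonneg (by exact_mod_cast hc) (hM.dotProduct_mulVec_nonneg x)

lemma psd_sum {n ι : Type*} [Fintype n] (S : Finset ι) (f : ι → Matrix n n ℂ)
    (h : ∀ i ∈ S, (f i).PosSemidef) : (∑ i ∈ S, f i).PosSemidef := by
  classical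
  induction S using Finset.induction with
  | empty => simpa using Matrix.PosSemidef.zero
  | insert _ _ hx ih =>
    rw [Finset.sum_insert hx]
    exact psd_add (h _ (Finset.mem_insert_self _ _))
      (ih fun i hi => h i (Finset.mem_insert_of_mem hi))

lemma rank_add_le' {m n : Type*} [Fintype n] (M N : Matrix m n ℂ) :
    (M + N).rank ≤ M.rank + N.rank := by
  classical
  unfold Matrix.rank
  rw [mulVecLin_add]
  refine le_trans (Submodule.finrank_mono ?_) (Submodule.finrank_add_le_finrank_add_finrank _ _)
  rw [LinearMap.range_le_iff_comap, eq_top_iff]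
  rintro x -
  exact Submodule.add_mem_sup (LinearMap.mem_range_self _ x) (LinearMap.mem_range_self _ x)

lemma rank_sum_le {m n ι : Type*} [Fintype n] (S : Finset ι) (f : ι → Matrix m n ℂ) :
    (∑ i ∈ S, f i).rank ≤ ∑ i ∈ S, (f i).rank := by
  classical
  induction S using Finset.induction with
  | empty => simp
  | insert _ _ hx ih =>
    rw [Finset.sum_insert hx, Finset.sum_insert hx]
    exact le_trans (rank_add_le' _ _) (by omega)

lemma rank_smul_outer_le {n : Type*} [Fintype n] [DecidableEq n] (c : ℂ) (v : n → ℂ) :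
    (c • outerM v).rank ≤ 1 := by
  have h : c • outerM v = vecMulVec (c • v) (star v) := by
    ext i j
    simp [outerM, vecMulVec_apply, mul_assoc]
  rw [h, vecMulVec_eq Unit]
  refine le_trans (rank_mul_le_left _ _) (le_trans (rank_le_card_width _) ?_)
  simp

lemma ptraceB_outer {A B : Type*} [Fintype A] [Fintype B] {k : ℕ}
    (c : Fin k → ℝ) (f : Fin k → A → ℂ) (g : Fin k → B → ℂ)
    (hg : ∀ i j, (∑ y, star (g i y) * g j y) = if i = j then 1 else 0) :
    ptraceB (outerM (fun p => ∑ i, (c i : ℂ) * f i p.1 * g i p.2)) =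
      ∑ i, (((c i)^2 : ℝ) : ℂ) • outerM (f i) := by
  ext x x'
  simp only [ptraceB, outerM, of_apply, vecMulVec_apply, Pi.star_apply, Matrix.sum_apply,
    Matrix.smul_apply, smul_eq_mul]
  calc ∑ y, (∑ i, (c i : ℂ) * f i x * g i y) * star (∑ j, (c j : ℂ) * f j x' * g j y)
      = ∑ y, ∑ i, ∑ j, ((c i : ℂ) * f i x * g i y) * ((c j : ℂ) * star (f j x') * star (g j y)) := by
        refine Finset.sum_congr rfl fun y _ => ?_
        rw [star_sum, Finset.sum_mul_sum]
        refine Finset.sum_congr rfl fun i _ => Finset.sum_congr rfl fun j _ => ?_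
        simp only [star_mul', Complex.star_def, Complex.conj_ofReal, _root_.map_mul]
    _ = ∑ i, ∑ j, ((c i : ℂ) * (c j : ℂ) * (f i x * star (f j x'))) * ∑ y, g i y * star (g j y) := by
        rw [Finset.sum_comm]
        refine Finset.sum_congr rfl fun i _ => ?_
        rw [Finset.sum_comm]
        refine Finset.sum_congr rfl fun j _ => ?_
        rw [Finset.mul_sum]
        exact Finset.sum_congr rfl fun y _ => by ring
    _ = ∑ i, ((c i)^2 : ℂ) * (f i x * star (f i x')) := by
        refine Finset.sum_congr rfl fun i _ => ?_
        have key : ∀ j, (∑ y, g i y * star (g j y)) = if j = i then 1 else 0 := by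
          intro j
          rw [← hg j i]
          exact Finset.sum_congr rfl fun y _ => mul_comm _ _
        simp only [key, mul_ite, mul_one, mul_zero, Finset.sum_ite_eq', Finset.mem_univ, if_true]
        ring
  simp

lemma ptraceA_outer {A B : Type*} [Fintype A] [Fintype B] {k : ℕ}
    (c : Fin k → ℝ) (f : Fin k → A → ℂ) (g : Fin k → B → ℂ)
    (hf : ∀ i j, (∑ x, star (f i x) * f j x) = if i = j then 1 else 0) :
    ptraceA (outerM (fun p => ∑ i, (c i : ℂ) * f i p.1 * g i p.2)) =
      ∑ i, (((c i)^2 : ℝ) : ℂ) • outerM (g i) := by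
  ext y y'
  simp only [ptraceA, outerM, of_apply, vecMulVec_apply, Pi.star_apply, Matrix.sum_apply,
    Matrix.smul_apply, smul_eq_mul]
  calc ∑ x, (∑ i, (c i : ℂ) * f i x * g i y) * star (∑ j, (c j : ℂ) * f j x * g j y')
      = ∑ x, ∑ i, ∑ j, ((c i : ℂ) * g i y * f i x) * ((c j : ℂ) * star (g j y') * star (f j x)) := by
        refine Finset.sum_congr rfl fun x _ => ?_
        rw [star_sum, Finset.sum_mul_sum]
        refine Finset.sum_congr rfl fun i _ => Finset.sum_congr rfl fun j _ => ?_
        simp only [star_mul', Complex.star_def, Complex.conj_ofReal, _root_.map_mul]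
        ring
    _ = ∑ i, ∑ j, ((c i : ℂ) * (c j : ℂ) * (g i y * star (g j y'))) * ∑ x, f i x * star (f j x) := by
        rw [Finset.sum_comm]
        refine Finset.sum_congr rfl fun i _ => ?_
        rw [Finset.sum_comm]
        refine Finset.sum_congr rfl fun j _ => ?_
        rw [Finset.mul_sum]
        exact Finset.sum_congr rfl fun x _ => by ring
    _ = ∑ i, ((c i)^2 : ℂ) * (g i y * star (g i y')) := by
        refine Finset.sum_congr rfl fun i _ => ?_
        have key : ∀ j, (∑ x, f i x * star (f j x)) = if j = i then 1 else 0 := by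
          intro j
          rw [← hf j i]
          exact Finset.sum_congr rfl fun x _ => mul_comm _ _
        simp only [key, mul_ite, mul_one, mul_zero, Finset.sum_ite_eq', Finset.mem_univ, if_true]
        ring
  simp

end Helpers

/-- One step of the entropy-absorbing pairing procedure: subtracting the marginals of
`|u⟩⟨u|`, where `|u⟩ = Σ_i √(min(λ_i,μ_i)) |s_i⟩⊗|r_i⟩` pairs the eigenvectors of `α` and
`β` (nonzero eigenvalues, smallest first), leaves positive semidefinite states whose ranks
sum to at most `max(a, b)`. -/
theorem absorb_entropy_step
    {A B : Type*} [Fintype A] [Fintype B] [DecidableEq A] [DecidableEq B]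
    (α : Matrix A A ℂ) (β : Matrix B B ℂ)
    (a b : ℕ) (lam : Fin a → ℝ) (mu : Fin b → ℝ)
    (s : Fin a → A → ℂ) (r : Fin b → B → ℂ)
    (hs : ∀ i j, (∑ x, star (s i x) * s j x) = if i = j then 1 else 0)
    (hr : ∀ i j, (∑ y, star (r i y) * r j y) = if i = j then 1 else 0)
    (hlampos : ∀ i, 0 < lam i) (hmupos : ∀ i, 0 < mu i)
    (hlammono : Monotone lam) (hmumono : Monotone mu)
    (hα : α = ∑ i, (lam i : ℂ) • outerM (s i))
    (hβ : β = ∑ i, (mu i : ℂ) • outerM (r i))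
    (hrankα : α.rank = a) (hrankβ : β.rank = b)
    (htr : α.trace = β.trace)
    (u : A × B → ℂ)
    (hu : u = fun p => ∑ i : Fin (min a b),
      (Real.sqrt (min (lam ⟨i.val, lt_of_lt_of_le i.isLt (min_le_left a b)⟩)
          (mu ⟨i.val, lt_of_lt_of_le i.isLt (min_le_right a b)⟩)) : ℂ) *
        s ⟨i.val, lt_of_lt_of_le i.isLt (min_le_left a b)⟩ p.1 *
        r ⟨i.val, lt_of_lt_of_le i.isLt (min_le_right a b)⟩ p.2) :
    (α - ptraceB (outerM u)).PosSemidef ∧ (β - ptraceA (outerM u)).PosSemidef ∧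
      (α - ptraceB (outerM u)).rank + (β - ptraceA (outerM u)).rank ≤ max a b := by
  classical
  have hma : min a b ≤ a := min_le_left a b
  have hmb : min a b ≤ b := min_le_right a b
  set m : ℕ := min a b with hm
  set Fa : Fin m → Fin a := fun i => ⟨i.1, lt_of_lt_of_le i.2 hma⟩ with hFa
  set Fb : Fin m → Fin b := fun i => ⟨i.1, lt_of_lt_of_le i.2 hmb⟩ with hFb
  set Dd : Fin a → ℝ := fun i => if h : (i : ℕ) < b then min (lam i) (mu ⟨i.1, h⟩) else 0 with hDd
  set De : Fin b → ℝ := fun j => if h : (j : ℕ) < a then min (lam ⟨j.1, h⟩) (mu j) else 0 with hDe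
  have hminpos : ∀ i : Fin m, 0 ≤ min (lam (Fa i)) (mu (Fb i)) :=
    fun i => le_min (hlampos _).le (hmupos _).le
  have hg : ∀ i j : Fin m, (∑ y, star (r (Fb i) y) * r (Fb j) y) = if i = j then 1 else 0 := by
    intro i j
    rw [hr]
    simp [hFb, Fin.ext_iff]
  have hf : ∀ i j : Fin m, (∑ x, star (s (Fa i) x) * s (Fa j) x) = if i = j then 1 else 0 := by
    intro i j
    rw [hs]
    simp [hFa, Fin.ext_iff]
  -- marginals
  have h1 : ptraceB (outerM u) =
      ∑ i : Fin m, ((min (lam (Fa i)) (mu (Fb i)) : ℝ) : ℂ) • outerM (s (Fa i)) := by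
    rw [hu]
    refine (ptraceB_outer (fun i : Fin m => Real.sqrt (min (lam (Fa i)) (mu (Fb i))))
      (fun i => s (Fa i)) (fun i => r (Fb i)) hg).trans ?_
    refine Finset.sum_congr rfl fun i _ => ?_
    rw [Real.sq_sqrt (hminpos i)]
  have h2 : ptraceA (outerM u) =
      ∑ i : Fin m, ((min (lam (Fa i)) (mu (Fb i)) : ℝ) : ℂ) • outerM (r (Fb i)) := by
    rw [hu]
    refine (ptraceA_outer (fun i : Fin m => Real.sqrt (min (lam (Fa i)) (mu (Fb i))))
      (fun i => s (Fa i)) (fun i => r (Fb i)) hf).trans ?_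
    refine Finset.sum_congr rfl fun i _ => ?_
    rw [Real.sq_sqrt (hminpos i)]
  -- reindex the marginal sums over the big index sets
  have hreA : (∑ i : Fin m, ((min (lam (Fa i)) (mu (Fb i)) : ℝ) : ℂ) • outerM (s (Fa i))) =
      ∑ i : Fin a, ((Dd i : ℝ) : ℂ) • outerM (s i) := by
    rw [← Finset.sum_filter_of_ne (p := fun i : Fin a => (i : ℕ) < m)
      (fun i _ hne => by
        by_contra hlt
        apply hne
        have hb' : ¬ (i : ℕ) < b := by omega
        rw [hDd]
        simp [dif_neg hb'])]
    refine Finset.sum_bij' (fun (i : Fin m) _ => Fa i)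
      (fun (i : Fin a) hi => (⟨i.1, (Finset.mem_filter.mp hi).2⟩ : Fin m))
      ?_ ?_ ?_ ?_ ?_
    · intro i _
      simp [hFa, i.2]
    · intro i hi
      simp
    · intro i _
      simp [hFa]
    · intro i hi
      simp [hFa]
    · intro i _
      have hb' : (i : ℕ) < b := lt_of_lt_of_le i.2 hmb
      simp only [hDd, hFa]
      rw [dif_pos hb']
  have hreB : (∑ i : Fin m, ((min (lam (Fa i)) (mu (Fb i)) : ℝ) : ℂ) • outerM (r (Fb i))) =
      ∑ j : Fin b, ((De j : ℝ) : ℂ) • outerM (r j) := by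
    rw [← Finset.sum_filter_of_ne (p := fun j : Fin b => (j : ℕ) < m)
      (fun j _ hne => by
        by_contra hlt
        apply hne
        have ha' : ¬ (j : ℕ) < a := by omega
        rw [hDe]
        simp [dif_neg ha'])]
    refine Finset.sum_bij' (fun (i : Fin m) _ => Fb i)
      (fun (j : Fin b) hj => (⟨j.1, (Finset.mem_filter.mp hj).2⟩ : Fin m))
      ?_ ?_ ?_ ?_ ?_
    · intro i _
      simp [hFb, i.2]
    · intro j hj
      simp
    · intro i _
      simp [hFb]
    · intro j hj
      simp [hFb]
    · intro i _
      have ha' : (i : ℕ) < a := lt_of_lt_of_le i.2 hma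
      simp only [hDe, hFb]
      rw [dif_pos ha']
  -- difference representations
  have hA' : α - ptraceB (outerM u) = ∑ i : Fin a, ((lam i - Dd i : ℝ) : ℂ) • outerM (s i) := by
    rw [hα, h1, hreA, ← Finset.sum_sub_distrib]
    refine Finset.sum_congr rfl fun i _ => ?_
    rw [← sub_smul]
    congr 1
    push_cast
    ring
  have hB' : β - ptraceA (outerM u) = ∑ j : Fin b, ((mu j - De j : ℝ) : ℂ) • outerM (r j) := by
    rw [hβ, h2, hreB, ← Finset.sum_sub_distrib]
    refine Finset.sum_congr rfl fun j _ => ?_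
    rw [← sub_smul]
    congr 1
    push_cast
    ring
  -- nonnegativity of coefficients
  have hdnn : ∀ i : Fin a, 0 ≤ lam i - Dd i := by
    intro i
    rw [sub_nonneg]
    simp only [hDd]
    by_cases h : (i : ℕ) < b
    · rw [dif_pos h]; exact min_le_left _ _
    · rw [dif_neg h]; exact (hlampos i).le
  have henn : ∀ j : Fin b, 0 ≤ mu j - De j := by
    intro j
    rw [sub_nonneg]
    simp only [hDe]
    by_cases h : (j : ℕ) < a
    · rw [dif_pos h]; exact min_le_right _ _
    · rw [dif_neg h]; exact (hmupos j).le
  refine ⟨?_, ?_, ?_⟩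
  · rw [hA']
    exact psd_sum _ _ fun i _ => psd_smul (hdnn i) (outerM_psd _)
  · rw [hB']
    exact psd_sum _ _ fun j _ => psd_smul (henn j) (outerM_psd _)
  -- rank bound
  set Sa : Finset (Fin a) := Finset.univ.filter (fun i => lam i - Dd i ≠ 0) with hSa
  set Sb : Finset (Fin b) := Finset.univ.filter (fun j => mu j - De j ≠ 0) with hSb
  have hrkA : (α - ptraceB (outerM u)).rank ≤ Sa.card := by
    rw [hA', ← Finset.sum_filter_of_ne (p := fun i : Fin a => lam i - Dd i ≠ 0)
      (fun i _ hne h0 => hne (by rw [h0]; simp))]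
    refine (rank_sum_le _ _).trans ?_
    calc ∑ i ∈ Sa, (((lam i - Dd i : ℝ) : ℂ) • outerM (s i)).rank
        ≤ ∑ _i ∈ Sa, 1 := Finset.sum_le_sum fun i _ => rank_smul_outer_le _ _
      _ = Sa.card := by simp
  have hrkB : (β - ptraceA (outerM u)).rank ≤ Sb.card := by
    rw [hB', ← Finset.sum_filter_of_ne (p := fun j : Fin b => mu j - De j ≠ 0)
      (fun j _ hne h0 => hne (by rw [h0]; simp))]
    refine (rank_sum_le _ _).trans ?_
    calc ∑ j ∈ Sb, (((mu j - De j : ℝ) : ℂ) • outerM (r j)).rank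
        ≤ ∑ _j ∈ Sb, 1 := Finset.sum_le_sum fun j _ => rank_smul_outer_le _ _
      _ = Sb.card := by simp
  -- counting
  set Ta : Finset ℕ := Sa.image Fin.val with hTa
  set Tb : Finset ℕ := Sb.image Fin.val with hTb
  have hcardTa : Ta.card = Sa.card := Finset.card_image_of_injective _ Fin.val_injective
  have hcardTb : Tb.card = Sb.card := Finset.card_image_of_injective _ Fin.val_injective
  have hTaR : Ta ⊆ Finset.range a := by
    intro k hk
    obtain ⟨i, _, rfl⟩ := Finset.mem_image.mp hk
    exact Finset.mem_range.mpr i.2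
  have hTbR : Tb ⊆ Finset.range b := by
    intro k hk
    obtain ⟨j, _, rfl⟩ := Finset.mem_image.mp hk
    exact Finset.mem_range.mpr j.2
  have hdisj : Disjoint (Ta ∩ Finset.range m) (Tb ∩ Finset.range m) := by
    rw [Finset.disjoint_left]
    intro k hk1 hk2
    obtain ⟨hk1a, hk1r⟩ := Finset.mem_inter.mp hk1
    obtain ⟨hk2a, _⟩ := Finset.mem_inter.mp hk2
    have hkm : k < m := Finset.mem_range.mp hk1r
    have hka : k < a := lt_of_lt_of_le hkm hma
    have hkb : k < b := lt_of_lt_of_le hkm hmb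
    obtain ⟨i, hi, hiv⟩ := Finset.mem_image.mp hk1a
    obtain ⟨j, hj, hjv⟩ := Finset.mem_image.mp hk2a
    have hi' : i = ⟨k, hka⟩ := Fin.ext hiv
    have hj' : j = ⟨k, hkb⟩ := Fin.ext hjv
    rw [hSa, Finset.mem_filter] at hi
    rw [hSb, Finset.mem_filter] at hj
    have hd := hi.2
    have he := hj.2
    rw [hi'] at hd
    rw [hj'] at he
    rw [hDd] at hd
    rw [hDe] at he
    simp only [dif_pos hkb, dif_pos hka] at hd he
    rcases min_choice (lam ⟨k, hka⟩) (mu ⟨k, hkb⟩) with h | h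
    · exact hd (by rw [h]; ring)
    · exact he (by rw [h]; ring)
  have hsplitA : Ta.card = (Ta ∩ Finset.range m).card + (Ta \ Finset.range m).card :=
    (Finset.card_inter_add_card_sdiff Ta (Finset.range m)).symm
  have hsplitB : Tb.card = (Tb ∩ Finset.range m).card + (Tb \ Finset.range m).card :=
    (Finset.card_inter_add_card_sdiff Tb (Finset.range m)).symm
  have htailA : (Ta \ Finset.range m).card ≤ a - m := by
    have hsub : Ta \ Finset.range m ⊆ Finset.range a \ Finset.range m :=
      Finset.sdiff_subset_sdiff hTaR le_rfl
    refine (Finset.card_le_card hsub).trans ?_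
    rw [Finset.card_sdiff_of_subset (Finset.range_subset_range.mpr hma)]
    simp
  have htailB : (Tb \ Finset.range m).card ≤ b - m := by
    have hsub : Tb \ Finset.range m ⊆ Finset.range b \ Finset.range m :=
      Finset.sdiff_subset_sdiff hTbR le_rfl
    refine (Finset.card_le_card hsub).trans ?_
    rw [Finset.card_sdiff_of_subset (Finset.range_subset_range.mpr hmb)]
    simp
  have hhead : (Ta ∩ Finset.range m).card + (Tb ∩ Finset.range m).card ≤ m := by
    rw [← Finset.card_union_of_disjoint hdisj]
    refine (Finset.card_le_card ?_).trans (Finset.card_range m).le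
    exact Finset.union_subset Finset.inter_subset_right Finset.inter_subset_right
  have hfinal : Sa.card + Sb.card ≤ max a b := by
    have h := hhead
    have : Sa.card + Sb.card ≤ m + (a - m) + (b - m) := by omega
    omega
  omega
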